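/- For i = 1, 2, let X_i be a finite undirected simple graph with bi-threshold vertex functions (arbitrary per-vertex up- and down-thresholds) and let π_i be a permutation of its vertices such that the SDS map F_{π_i} over X_i has a periodic orbit of length c_i. Let u_i ∈ v[X_i], and let X be the graph obtained as the disjoint union of X_1 and X_2 together with one additional new vertex w and the two edges {u_1, w} and {u_2, w}. Keep all thresholds of vertices of X_1 and X_2 unchanged, and assign to w the up-threshold k↑_w = 3. Then the SDS map over X with update sequence π = (π_1 | π_2 | w) (the juxtaposition of π_1, then π_2, then w) has a periodic orbit of length lcm(c_1, c_2). -/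

import Mathlib

/-- `σ(x[v])`: the number of vertices in state `1` among `v` and its neighbors. -/
noncomputable def sigmaLoc {V : Type} (G : SimpleGraph V) (x : V → Bool) (v : V) : ℕ :=
  {u : V | G.Adj v u ∧ x u = true}.ncard + (if x v = true then 1 else 0)

/-- The `X`-local bi-threshold function `F_v`: updates coordinate `v` of `x` by the
bi-threshold rule with up-threshold `kup v` and down-threshold `kdown v`, leaving all other
coordinates unchanged. -/
noncomputable def localStep {V : Type} [DecidableEq V] (G : SimpleGraph V)
    (kup kdown : V → ℕ) (x : V → Bool) (v : V) : V → Bool :=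
  Function.update x v
    (if x v = true then (if sigmaLoc G x v < kdown v then false else true)
     else (if kup v ≤ sigmaLoc G x v then true else false))

/-- The sequential dynamical system map for the update sequence `l`:
apply the local functions `F_v` in the order given by `l`. -/
noncomputable def sdsMap {V : Type} [DecidableEq V] (G : SimpleGraph V)
    (kup kdown : V → ℕ) (l : List V) (x : V → Bool) : V → Bool :=
  l.foldl (localStep G kup kdown) x

/-- The graph obtained as the disjoint union of `G₁` and `G₂` together with one extra
vertex `w` joined to `u₁ ∈ G₁` and `u₂ ∈ G₂`. -/
def unionGraph {n₁ n₂ : ℕ} (G₁ : SimpleGraph (Fin n₁)) (G₂ : SimpleGraph (Fin n₂))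
    (u₁ : Fin n₁) (u₂ : Fin n₂) : SimpleGraph ((Fin n₁ ⊕ Fin n₂) ⊕ Unit) :=
  SimpleGraph.fromRel (fun v w =>
    match v, w with
    | .inl (.inl a), .inl (.inl b) => G₁.Adj a b
    | .inl (.inr a), .inl (.inr b) => G₂.Adj a b
    | .inl (.inl a), .inr _ => a = u₁
    | .inl (.inr a), .inr _ => a = u₂
    | _, _ => False)

section Helpers
variable {n₁ n₂ : ℕ} {G₁ : SimpleGraph (Fin n₁)} {G₂ : SimpleGraph (Fin n₂)} {u₁ : Fin n₁} {u₂ : Fin n₂}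

lemma uadj_ll {a b : Fin n₁} :
    (unionGraph G₁ G₂ u₁ u₂).Adj (.inl (.inl a)) (.inl (.inl b)) ↔ G₁.Adj a b := by
  constructor
  · rintro h
    rw [unionGraph, SimpleGraph.fromRel_adj] at h
    rcases h.2 with h' | h'
    · exact h'
    · exact h'.symm
  · intro h
    rw [unionGraph, SimpleGraph.fromRel_adj]
    exact ⟨by simp [h.ne], Or.inl h⟩

lemma uadj_lr {a : Fin n₁} {b : Fin n₂} :
    ¬ (unionGraph G₁ G₂ u₁ u₂).Adj (.inl (.inl a)) (.inl (.inr b)) := by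
  rw [unionGraph, SimpleGraph.fromRel_adj]
  rintro ⟨-, h | h⟩ <;> exact h

lemma uadj_lw {a : Fin n₁} {t : Unit} :
    (unionGraph G₁ G₂ u₁ u₂).Adj (.inl (.inl a)) (.inr t) ↔ a = u₁ := by
  rw [unionGraph, SimpleGraph.fromRel_adj]
  constructor
  · rintro ⟨-, h | h⟩
    · exact h
    · exact h.elim
  · intro h; exact ⟨by simp, Or.inl h⟩

lemma uadj_w {u : (Fin n₁ ⊕ Fin n₂) ⊕ Unit} (h : (unionGraph G₁ G₂ u₁ u₂).Adj (.inr ()) u) :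
    u = .inl (.inl u₁) ∨ u = .inl (.inr u₂) := by
  rw [unionGraph, SimpleGraph.fromRel_adj] at h
  obtain ⟨hne, h | h⟩ := h
  · exact h.elim
  · rcases u with (a | a) | t
    · exact Or.inl (by rw [show a = u₁ from h])
    · exact Or.inr (by rw [show a = u₂ from h])
    · exact absurd rfl hne

lemma uadj_rr {a b : Fin n₂} :
    (unionGraph G₁ G₂ u₁ u₂).Adj (.inl (.inr a)) (.inl (.inr b)) ↔ G₂.Adj a b := by
  constructor
  · rintro h
    rw [unionGraph, SimpleGraph.fromRel_adj] at h
    rcases h.2 with h' | h'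
    · exact h'
    · exact h'.symm
  · intro h
    rw [unionGraph, SimpleGraph.fromRel_adj]
    exact ⟨by simp [h.ne], Or.inl h⟩

lemma uadj_rl {a : Fin n₂} {b : Fin n₁} :
    ¬ (unionGraph G₁ G₂ u₁ u₂).Adj (.inl (.inr a)) (.inl (.inl b)) := by
  rw [unionGraph, SimpleGraph.fromRel_adj]
  rintro ⟨-, h | h⟩ <;> exact h.elim

lemma uadj_rw {a : Fin n₂} {t : Unit} :
    (unionGraph G₁ G₂ u₁ u₂).Adj (.inl (.inr a)) (.inr t) ↔ a = u₂ := by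
  rw [unionGraph, SimpleGraph.fromRel_adj]
  constructor
  · rintro ⟨-, h | h⟩
    · exact h
    · exact h.elim
  · intro h; exact ⟨by simp, Or.inl h⟩

/-- Lift a pair of component states to the union graph, with `w` off. -/
def lift2 (x₁ : Fin n₁ → Bool) (x₂ : Fin n₂ → Bool) : (Fin n₁ ⊕ Fin n₂) ⊕ Unit → Bool :=
  Sum.elim (Sum.elim x₁ x₂) (fun _ => false)

lemma sigma_l (x₁ : Fin n₁ → Bool) (x₂ : Fin n₂ → Bool) (v : Fin n₁) :
    sigmaLoc (unionGraph G₁ G₂ u₁ u₂) (lift2 x₁ x₂) (.inl (.inl v)) = sigmaLoc G₁ x₁ v := by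
  unfold sigmaLoc
  have hset : {u : (Fin n₁ ⊕ Fin n₂) ⊕ Unit |
        (unionGraph G₁ G₂ u₁ u₂).Adj (.inl (.inl v)) u ∧ lift2 x₁ x₂ u = true}
      = (fun a => (.inl (.inl a) : (Fin n₁ ⊕ Fin n₂) ⊕ Unit)) ''
        {u : Fin n₁ | G₁.Adj v u ∧ x₁ u = true} := by
    ext u
    rcases u with (a | a) | t
    · simp [lift2, uadj_ll]
    · simp [lift2, uadj_lr]
    · simp [lift2]
  rw [hset, Set.ncard_image_of_injective _ (fun a b h => by simpa using h)]
  simp [lift2]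
  rfl

lemma sigma_r (x₁ : Fin n₁ → Bool) (x₂ : Fin n₂ → Bool) (v : Fin n₂) :
    sigmaLoc (unionGraph G₁ G₂ u₁ u₂) (lift2 x₁ x₂) (.inl (.inr v)) = sigmaLoc G₂ x₂ v := by
  unfold sigmaLoc
  have hset : {u : (Fin n₁ ⊕ Fin n₂) ⊕ Unit |
        (unionGraph G₁ G₂ u₁ u₂).Adj (.inl (.inr v)) u ∧ lift2 x₁ x₂ u = true}
      = (fun a => (.inl (.inr a) : (Fin n₁ ⊕ Fin n₂) ⊕ Unit)) ''
        {u : Fin n₂ | G₂.Adj v u ∧ x₂ u = true} := by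
    ext u
    rcases u with (a | a) | t
    · simp [lift2, uadj_rl]
    · simp [lift2, uadj_rr]
    · simp [lift2]
  rw [hset, Set.ncard_image_of_injective _ (fun a b h => by simpa using h)]
  simp [lift2]
  rfl

lemma sigma_w (x₁ : Fin n₁ → Bool) (x₂ : Fin n₂ → Bool) :
    sigmaLoc (unionGraph G₁ G₂ u₁ u₂) (lift2 x₁ x₂) (.inr ()) < 3 := by
  unfold sigmaLoc
  have hsub : {u : (Fin n₁ ⊕ Fin n₂) ⊕ Unit |
        (unionGraph G₁ G₂ u₁ u₂).Adj (.inr ()) u ∧ lift2 x₁ x₂ u = true}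
      ⊆ {.inl (.inl u₁), .inl (.inr u₂)} := by
    rintro u ⟨h, -⟩
    exact uadj_w h
  have h2 : ({(.inl (.inl u₁) : (Fin n₁ ⊕ Fin n₂) ⊕ Unit), .inl (.inr u₂)} : Set _).ncard ≤ 2 := by
    calc _ ≤ ({(.inl (.inr u₂) : (Fin n₁ ⊕ Fin n₂) ⊕ Unit)} : Set _).ncard + 1 :=
          Set.ncard_insert_le _ _
      _ ≤ 2 := by simp
  have := Set.ncard_le_ncard hsub (Set.toFinite _)
  rw [show lift2 x₁ x₂ (.inr ()) = false from rfl]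
  simp only [Bool.false_eq_true, if_false, add_zero]
  omega

lemma update_ll (x₁ : Fin n₁ → Bool) (x₂ : Fin n₂ → Bool) (v : Fin n₁) (b : Bool) :
    Function.update (lift2 x₁ x₂) (.inl (.inl v)) b = lift2 (Function.update x₁ v b) x₂ := by
  funext u
  rcases u with (a | a) | t
  · by_cases h : a = v
    · subst h; simp only [lift2, Function.update_self, Sum.elim_inl]
    · rw [Function.update_of_ne (by simpa using h)]; simp only [lift2, Function.update_of_ne h, Sum.elim_inl]
  · rw [Function.update_of_ne (by simp)]; rfl
  · rw [Function.update_of_ne (by simp)]; rfl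

lemma update_rr (x₁ : Fin n₁ → Bool) (x₂ : Fin n₂ → Bool) (v : Fin n₂) (b : Bool) :
    Function.update (lift2 x₁ x₂) (.inl (.inr v)) b = lift2 x₁ (Function.update x₂ v b) := by
  funext u
  rcases u with (a | a) | t
  · rw [Function.update_of_ne (by simp)]; rfl
  · by_cases h : a = v
    · subst h; simp only [lift2, Function.update_self, Sum.elim_inl, Sum.elim_inr]
    · rw [Function.update_of_ne (by simpa using h)]; simp only [lift2, Function.update_of_ne h, Sum.elim_inl, Sum.elim_inr]
  · rw [Function.update_of_ne (by simp)]; rfl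

variable (kup₁ kdown₁ : Fin n₁ → ℕ) (kup₂ kdown₂ : Fin n₂ → ℕ) (kdw : ℕ)

lemma step_l (x₁ : Fin n₁ → Bool) (x₂ : Fin n₂ → Bool) (v : Fin n₁) :
    localStep (unionGraph G₁ G₂ u₁ u₂)
      (Sum.elim (Sum.elim kup₁ kup₂) (fun _ => 3))
      (Sum.elim (Sum.elim kdown₁ kdown₂) (fun _ => kdw)) (lift2 x₁ x₂) (.inl (.inl v))
    = lift2 (localStep G₁ kup₁ kdown₁ x₁ v) x₂ := by
  unfold localStep
  rw [sigma_l, update_ll]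
  rfl

lemma step_r (x₁ : Fin n₁ → Bool) (x₂ : Fin n₂ → Bool) (v : Fin n₂) :
    localStep (unionGraph G₁ G₂ u₁ u₂)
      (Sum.elim (Sum.elim kup₁ kup₂) (fun _ => 3))
      (Sum.elim (Sum.elim kdown₁ kdown₂) (fun _ => kdw)) (lift2 x₁ x₂) (.inl (.inr v))
    = lift2 x₁ (localStep G₂ kup₂ kdown₂ x₂ v) := by
  unfold localStep
  rw [sigma_r, update_rr]
  rfl

lemma step_w (x₁ : Fin n₁ → Bool) (x₂ : Fin n₂ → Bool) :
    localStep (unionGraph G₁ G₂ u₁ u₂)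
      (Sum.elim (Sum.elim kup₁ kup₂) (fun _ => 3))
      (Sum.elim (Sum.elim kdown₁ kdown₂) (fun _ => kdw)) (lift2 x₁ x₂) (.inr ())
    = lift2 x₁ x₂ := by
  unfold localStep
  have hv : lift2 x₁ x₂ (.inr ()) = false := rfl
  rw [hv]
  have hσ := sigma_w (G₁:=G₁) (G₂:=G₂) (u₁:=u₁) (u₂:=u₂) x₁ x₂
  have h3 : ¬ (Sum.elim (Sum.elim kup₁ kup₂) (fun _ => 3) (Sum.inr ()) ≤
      sigmaLoc (unionGraph G₁ G₂ u₁ u₂) (lift2 x₁ x₂) (.inr ())) := by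
    simpa using hσ
  simp only [Bool.false_eq_true, if_false]
  rw [if_neg h3]
  exact Function.update_eq_self _ _

lemma fold_l (l : List (Fin n₁)) (x₁ : Fin n₁ → Bool) (x₂ : Fin n₂ → Bool) :
    (l.map (fun a => (.inl (.inl a) : (Fin n₁ ⊕ Fin n₂) ⊕ Unit))).foldl
      (localStep (unionGraph G₁ G₂ u₁ u₂)
        (Sum.elim (Sum.elim kup₁ kup₂) (fun _ => 3))
        (Sum.elim (Sum.elim kdown₁ kdown₂) (fun _ => kdw))) (lift2 x₁ x₂)
    = lift2 (l.foldl (localStep G₁ kup₁ kdown₁) x₁) x₂ := by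
  induction l generalizing x₁ with
  | nil => rfl
  | cons v l ih =>
    simp only [List.map_cons, List.foldl_cons]
    rw [step_l, ih]

lemma fold_r (l : List (Fin n₂)) (x₁ : Fin n₁ → Bool) (x₂ : Fin n₂ → Bool) :
    (l.map (fun a => (.inl (.inr a) : (Fin n₁ ⊕ Fin n₂) ⊕ Unit))).foldl
      (localStep (unionGraph G₁ G₂ u₁ u₂)
        (Sum.elim (Sum.elim kup₁ kup₂) (fun _ => 3))
        (Sum.elim (Sum.elim kdown₁ kdown₂) (fun _ => kdw))) (lift2 x₁ x₂)
    = lift2 x₁ (l.foldl (localStep G₂ kup₂ kdown₂) x₂) := by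
  induction l generalizing x₂ with
  | nil => rfl
  | cons v l ih =>
    simp only [List.map_cons, List.foldl_cons]
    rw [step_r, ih]

lemma sds_union (π₁ : List (Fin n₁)) (π₂ : List (Fin n₂)) (x₁ : Fin n₁ → Bool)
    (x₂ : Fin n₂ → Bool) :
    sdsMap (unionGraph G₁ G₂ u₁ u₂)
      (Sum.elim (Sum.elim kup₁ kup₂) (fun _ => 3))
      (Sum.elim (Sum.elim kdown₁ kdown₂) (fun _ => kdw))
      (π₁.map (fun a => .inl (.inl a)) ++ π₂.map (fun a => .inl (.inr a)) ++ [.inr ()])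
      (lift2 x₁ x₂)
    = lift2 (sdsMap G₁ kup₁ kdown₁ π₁ x₁) (sdsMap G₂ kup₂ kdown₂ π₂ x₂) := by
  unfold sdsMap
  rw [List.foldl_append, List.foldl_append, fold_l, fold_r]
  simp only [List.foldl_cons, List.foldl_nil]
  rw [step_w]

lemma sds_union_iter (π₁ : List (Fin n₁)) (π₂ : List (Fin n₂)) (x₁ : Fin n₁ → Bool)
    (x₂ : Fin n₂ → Bool) (k : ℕ) :
    (sdsMap (unionGraph G₁ G₂ u₁ u₂)
      (Sum.elim (Sum.elim kup₁ kup₂) (fun _ => 3))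
      (Sum.elim (Sum.elim kdown₁ kdown₂) (fun _ => kdw))
      (π₁.map (fun a => .inl (.inl a)) ++ π₂.map (fun a => .inl (.inr a)) ++ [.inr ()]))^[k]
      (lift2 x₁ x₂)
    = lift2 ((sdsMap G₁ kup₁ kdown₁ π₁)^[k] x₁) ((sdsMap G₂ kup₂ kdown₂ π₂)^[k] x₂) := by
  induction k generalizing x₁ x₂ with
  | zero => rfl
  | succ k ih =>
    rw [Function.iterate_succ_apply, Function.iterate_succ_apply,
      Function.iterate_succ_apply, sds_union, ih]

lemma iter_fix_of_dvd {α : Type*} (f : α → α) (x : α) {c m : ℕ} (h : f^[c] x = x)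
    (hd : c ∣ m) : f^[m] x = x := by
  obtain ⟨k, rfl⟩ := hd
  rw [Function.iterate_mul]
  exact Function.iterate_fixed h k

lemma dvd_of_fix {α : Type*} (f : α → α) (x : α) {c : ℕ} (hc : 0 < c) (hfix : f^[c] x = x)
    (hmin : ∀ p : ℕ, 0 < p → p < c → f^[p] x ≠ x) {p : ℕ} (hp : f^[p] x = x) : c ∣ p := by
  have hmod : f^[p % c] x = x := by
    have : f^[p % c + c * (p / c)] x = x := by
      rw [Nat.mod_add_div]; exact hp
    rwa [Function.iterate_add_apply,
      iter_fix_of_dvd f x hfix (Dvd.intro _ rfl)] at this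
  rcases Nat.eq_zero_or_pos (p % c) with h0 | h0
  · exact Nat.dvd_of_mod_eq_zero h0
  · exact absurd hmod (hmin _ h0 (Nat.mod_lt _ hc))

end Helpers

/-- if the bi-threshold SDS over `G i` with update sequence `π i` has a
periodic orbit of length `c i` (for `i = 1, 2`), then the bi-threshold SDS over the union
graph (disjoint union of `G₁`, `G₂` plus a new vertex `w` adjacent to `u₁` and `u₂`), with
all old thresholds unchanged, up-threshold `3` at `w` (and any down-threshold `kdw` at `w`),
and update sequence `π = (π₁ | π₂ | w)`, has a periodic orbit of length `lcm(c₁, c₂)`. -/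
theorem union_bithreshold_lcm_cycle
    (n₁ n₂ : ℕ)
    (G₁ : SimpleGraph (Fin n₁)) (G₂ : SimpleGraph (Fin n₂))
    (kup₁ kdown₁ : Fin n₁ → ℕ) (kup₂ kdown₂ : Fin n₂ → ℕ)
    (π₁ : List (Fin n₁)) (hnd₁ : π₁.Nodup) (hall₁ : ∀ v, v ∈ π₁)
    (π₂ : List (Fin n₂)) (hnd₂ : π₂.Nodup) (hall₂ : ∀ v, v ∈ π₂)
    (c₁ c₂ : ℕ) (hc₁ : 0 < c₁) (hc₂ : 0 < c₂)
    (h₁ : ∃ x : Fin n₁ → Bool, (sdsMap G₁ kup₁ kdown₁ π₁)^[c₁] x = x ∧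
      ∀ p : ℕ, 0 < p → p < c₁ → (sdsMap G₁ kup₁ kdown₁ π₁)^[p] x ≠ x)
    (h₂ : ∃ x : Fin n₂ → Bool, (sdsMap G₂ kup₂ kdown₂ π₂)^[c₂] x = x ∧
      ∀ p : ℕ, 0 < p → p < c₂ → (sdsMap G₂ kup₂ kdown₂ π₂)^[p] x ≠ x)
    (u₁ : Fin n₁) (u₂ : Fin n₂) (kdw : ℕ) :
    ∃ y : (Fin n₁ ⊕ Fin n₂) ⊕ Unit → Bool,
      (sdsMap (unionGraph G₁ G₂ u₁ u₂)
          (Sum.elim (Sum.elim kup₁ kup₂) (fun _ => 3))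
          (Sum.elim (Sum.elim kdown₁ kdown₂) (fun _ => kdw))
          (π₁.map (fun a => .inl (.inl a)) ++ π₂.map (fun a => .inl (.inr a)) ++ [.inr ()]))^[Nat.lcm c₁ c₂] y = y ∧
      ∀ p : ℕ, 0 < p → p < Nat.lcm c₁ c₂ →
        (sdsMap (unionGraph G₁ G₂ u₁ u₂)
            (Sum.elim (Sum.elim kup₁ kup₂) (fun _ => 3))
            (Sum.elim (Sum.elim kdown₁ kdown₂) (fun _ => kdw))
            (π₁.map (fun a => .inl (.inl a)) ++ π₂.map (fun a => .inl (.inr a)) ++ [.inr ()]))^[p] y ≠ y := by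
  obtain ⟨x₁, hx₁, hmin₁⟩ := h₁
  obtain ⟨x₂, hx₂, hmin₂⟩ := h₂
  refine ⟨lift2 x₁ x₂, ?_, ?_⟩
  · rw [sds_union_iter]
    rw [iter_fix_of_dvd _ _ hx₁ (Nat.dvd_lcm_left _ _),
      iter_fix_of_dvd _ _ hx₂ (Nat.dvd_lcm_right _ _)]
  · intro p hp hplt hfix
    rw [sds_union_iter] at hfix
    have e₁ : (sdsMap G₁ kup₁ kdown₁ π₁)^[p] x₁ = x₁ := by
      funext a; exact congrFun hfix (.inl (.inl a))
    have e₂ : (sdsMap G₂ kup₂ kdown₂ π₂)^[p] x₂ = x₂ := by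
      funext a; exact congrFun hfix (.inl (.inr a))
    have d₁ := dvd_of_fix _ _ hc₁ hx₁ hmin₁ e₁
    have d₂ := dvd_of_fix _ _ hc₂ hx₂ hmin₂ e₂
    have := Nat.le_of_dvd hp (Nat.lcm_dvd d₁ d₂)
    omega
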